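/- In the ring R = k[a,b,c,d]/((a,b) ∩ (c,d)) (k a field), with y_1 = a^2, y_2 = b^2: the limit closure satisfies (y_1,y_2)^lim = (a^2, b^2, c, d), and y_1, y_2 is not a system of parameters, yet (y_1,y_2)^lim : ab ⊆ (x_1,x_2)^lim = m where x_1 = a+c, x_2 = b+d; thus the multiplication-by-(ab) map R/(x)^lim → R/(y)^lim is injective even though y is not a system of parameters. -/

import Mathlib

set_option synthInstance.maxHeartbeats 1000000
set_option maxHeartbeats 2000000


open MvPolynomial

/-- The defining ideal `(a,b) ∩ (c,d)` of `k[a,b,c,d]`. -/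
noncomputable def defIdeal (k : Type) [Field k] : Ideal (MvPolynomial (Fin 4) k) :=
  Ideal.span {X 0, X 1} ⊓ Ideal.span {X 2, X 3}

/-- The ring `k[a,b,c,d]/((a,b) ∩ (c,d))`. -/
abbrev QR (k : Type) [Field k] : Type :=
  MvPolynomial (Fin 4) k ⧸ defIdeal k

/-- The irrelevant maximal ideal `(a,b,c,d)` of `k[a,b,c,d]/((a,b) ∩ (c,d))`. -/
noncomputable def mQ (k : Type) [Field k] : Ideal (QR k) :=
  Ideal.span {Ideal.Quotient.mk (defIdeal k) (X 0), Ideal.Quotient.mk (defIdeal k) (X 1),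
    Ideal.Quotient.mk (defIdeal k) (X 2), Ideal.Quotient.mk (defIdeal k) (X 3)}

/-- The image of a polynomial in the localization of `QR k` at `mQ k`. -/
noncomputable def toLoc (k : Type) [Field k] [hp : (mQ k).IsPrime]
    (f : MvPolynomial (Fin 4) k) : Localization.AtPrime (mQ k) :=
  algebraMap (QR k) (Localization.AtPrime (mQ k)) (Ideal.Quotient.mk (defIdeal k) f)

/-- The limit closure of a pair of elements. -/
def limClosure2 {R : Type} [CommRing R] (z₁ z₂ : R) : Set R :=
  {r : R | ∃ t : ℕ, 1 ≤ t ∧ (z₁ * z₂) ^ (t - 1) * r ∈ Ideal.span {z₁ ^ t, z₂ ^ t}}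

section
variable (k : Type) [Field k]

local notation "S4" => MvPolynomial (Fin 4) k
local notation "mk4" => Ideal.Quotient.mk (defIdeal k)

-- span of all variables
lemma spanX_eq : (Ideal.span {(X 0 : S4), X 1, X 2, X 3}) =
    Ideal.span (X '' (Set.univ : Set (Fin 4))) := by
  congr 1
  ext p
  simp only [Set.image_univ, Set.mem_insert_iff, Set.mem_singleton_iff, Set.mem_range]
  constructor
  · rintro (rfl|rfl|rfl|rfl) <;> exact ⟨_, rfl⟩
  · rintro ⟨i, rfl⟩; fin_cases i <;> simp

lemma mem_spanX_iff (p : S4) :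
    p ∈ Ideal.span {(X 0 : S4), X 1, X 2, X 3} ↔ constantCoeff p = 0 := by
  rw [spanX_eq, mem_ideal_span_X_image]
  constructor
  · intro h
    by_contra hc
    obtain ⟨i, -, hi⟩ := h 0 (by simpa [mem_support_iff, constantCoeff_eq] using hc)
    simp at hi
  · intro h m hm
    have hm0 : m ≠ 0 := by
      rintro rfl
      exact (mem_support_iff.1 hm) (by simpa [constantCoeff_eq] using h)
    obtain ⟨i, hi⟩ : ∃ i, m i ≠ 0 := by
      by_contra hc
      push_neg at hc
      exact hm0 (Finsupp.ext fun i => hc i)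
    exact ⟨i, trivial, hi⟩

lemma defIdeal_le_spanX : defIdeal k ≤ Ideal.span {(X 0 : S4), X 1, X 2, X 3} := by
  refine inf_le_left.trans (Ideal.span_mono ?_)
  intro x hx
  rcases hx with rfl | rfl <;> simp

lemma mQ_eq_map : mQ k = Ideal.map mk4 (Ideal.span {(X 0 : S4), X 1, X 2, X 3}) := by
  rw [Ideal.map_span, Set.image_insert_eq, Set.image_insert_eq, Set.image_insert_eq,
    Set.image_singleton]
  rfl

lemma mk_mem_mQ_iff (p : S4) : mk4 p ∈ mQ k ↔ constantCoeff p = 0 := by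
  rw [mQ_eq_map, Ideal.mem_quotient_iff_mem_sup,
    sup_eq_left.mpr (defIdeal_le_spanX k), mem_spanX_iff]

end

section
variable (k : Type) [Field k] [hp : (mQ k).IsPrime]

local notation "S4" => MvPolynomial (Fin 4) k
local notation "mk4" => Ideal.Quotient.mk (defIdeal k)
local notation "Rk" => Localization.AtPrime (mQ k)

lemma toLoc_mul (f g : S4) : toLoc k (f * g) = toLoc k f * toLoc k g := by
  rw [toLoc, toLoc, toLoc, map_mul, map_mul]

lemma toLoc_add (f g : S4) : toLoc k (f + g) = toLoc k f + toLoc k g := by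
  rw [toLoc, toLoc, toLoc, map_add, map_add]

lemma toLoc_pow (f : S4) (n : ℕ) : toLoc k (f ^ n) = toLoc k f ^ n := by
  rw [toLoc, toLoc, map_pow, map_pow]

lemma toLoc_eq_zero (f : S4) (hf : f ∈ defIdeal k) : toLoc k f = 0 := by
  rw [toLoc, Ideal.Quotient.eq_zero_iff_mem.mpr hf, map_zero]

lemma toLoc_sub (f g : S4) : toLoc k (f - g) = toLoc k f - toLoc k g := by
  rw [toLoc, toLoc, toLoc, map_sub, map_sub]

lemma toLoc_congr {f g : S4} (h : f - g ∈ defIdeal k) : toLoc k f = toLoc k g := by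
  have h0 := toLoc_eq_zero k _ h
  rw [toLoc_sub, sub_eq_zero] at h0
  exact h0

lemma isUnit_toLoc {s : S4} (hs : constantCoeff s ≠ 0) : IsUnit (toLoc k s) := by
  rw [toLoc]
  exact IsLocalization.AtPrime.isUnit_to_map_iff Rk (mQ k) _ |>.mpr
    (fun h => hs ((mk_mem_mQ_iff k s).1 h))

/-- descent of ideal membership from the localization to the polynomial ring -/
lemma descend {f : S4} {G : Set S4}
    (h : toLoc k f ∈ Ideal.span (toLoc k '' G)) :
    ∃ s : S4, constantCoeff s ≠ 0 ∧ s * f ∈ Ideal.span G ⊔ defIdeal k := by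
  have himg : toLoc k '' G =
      (algebraMap (QR k) Rk) '' (mk4 '' G) := by
    rw [Set.image_image]; rfl
  rw [himg, ← Ideal.map_span, ← Ideal.map_span] at h
  obtain ⟨⟨⟨x, hxI⟩, s⟩, hs⟩ :=
    (IsLocalization.mem_map_algebraMap_iff (mQ k).primeCompl Rk).1 h
  rw [show toLoc k f = algebraMap (QR k) Rk (mk4 f) from rfl, ← map_mul] at hs
  obtain ⟨c, hc⟩ := (IsLocalization.eq_iff_exists (mQ k).primeCompl Rk).1 hs
  -- hc : ↑c * (mk4 f * ↑s) = ↑c * x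
  obtain ⟨s₀, hs₀⟩ := Ideal.Quotient.mk_surjective (I := defIdeal k) (↑c * ↑s)
  have hmem : mk4 (s₀ * f) ∈ Ideal.map mk4 (Ideal.span G) := by
    have : mk4 (s₀ * f) = ↑c * x := by
      rw [map_mul, hs₀, ← hc]; ring
    rw [this]
    exact Ideal.mul_mem_left _ _ hxI
  refine ⟨s₀, ?_, (Ideal.mem_quotient_iff_mem_sup).1 hmem⟩
  intro h0
  have : mk4 s₀ ∈ mQ k := (mk_mem_mQ_iff k s₀).2 h0
  rw [hs₀] at this
  exact (c * s).2 this

end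

section
variable (k : Type) [Field k]

local notation "S4" => MvPolynomial (Fin 4) k

lemma coeff_defIdeal_cd {j : S4} (hj : j ∈ defIdeal k) {ν : Fin 4 →₀ ℕ}
    (h2 : ν 2 = 0) (h3 : ν 3 = 0) : coeff ν j = 0 := by
  have hj2 : j ∈ Ideal.span {(X 2 : S4), X 3} := (Ideal.mem_inf.1 hj).2
  have himg : ({X 2, X 3} : Set S4) = X '' {2, 3} := by
    simp [Set.image_insert_eq]
  rw [himg, mem_ideal_span_X_image] at hj2
  by_contra hc
  obtain ⟨i, hi, hne⟩ := hj2 ν (mem_support_iff.2 hc)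
  rcases hi with rfl | rfl
  · exact hne h2
  · exact hne h3

lemma coeff_defIdeal_ab {j : S4} (hj : j ∈ defIdeal k) {ν : Fin 4 →₀ ℕ}
    (h0 : ν 0 = 0) (h1 : ν 1 = 0) : coeff ν j = 0 := by
  have hj1 : j ∈ Ideal.span {(X 0 : S4), X 1} := (Ideal.mem_inf.1 hj).1
  have himg : ({X 0, X 1} : Set S4) = X '' {0, 1} := by
    simp [Set.image_insert_eq]
  rw [himg, mem_ideal_span_X_image] at hj1
  by_contra hc
  obtain ⟨i, hi, hne⟩ := hj1 ν (mem_support_iff.2 hc)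
  rcases hi with rfl | rfl
  · exact hne h0
  · exact hne h1

lemma coeff_mul_X_pow (p : S4) (i : Fin 4) (n : ℕ) (ν : Fin 4 →₀ ℕ) :
    coeff ν (p * X i ^ n) =
      if Finsupp.single i n ≤ ν then coeff (ν - Finsupp.single i n) p else 0 := by
  rw [X_pow_eq_monomial, coeff_mul_monomial']
  split <;> simp

-- nonmembership engine for F2
lemma NM1 {s : S4} (hs : constantCoeff s ≠ 0) (n : ℕ) :
    s * X 2 ^ n ∉ Ideal.span {(X 0 : S4) ^ 2, X 1 ^ 2} ⊔ defIdeal k := by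
  intro h
  obtain ⟨u, hu, j, hj, huj⟩ := Submodule.mem_sup.1 h
  obtain ⟨α, β, hαβ⟩ := Ideal.mem_span_pair.1 hu
  set ν : Fin 4 →₀ ℕ := Finsupp.single 2 n with hν
  have key := congrArg (coeff ν) huj.symm
  rw [← hαβ, coeff_mul_X_pow, if_pos le_rfl] at key
  simp only [coeff_add] at key
  rw [coeff_mul_X_pow, coeff_mul_X_pow, if_neg, if_neg,
    coeff_defIdeal_ab k hj (by simp [hν, Finsupp.single_apply])
      (by simp [hν, Finsupp.single_apply])] at key
  · simp only [hν, tsub_self, add_zero, zero_add] at key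
    exact hs (key ▸ rfl)
  · rw [Finsupp.single_le_iff]
    simp [hν, Finsupp.single_apply]
  · rw [Finsupp.single_le_iff]
    simp [hν, Finsupp.single_apply]

end

section
variable (k : Type) [Field k]

local notation "S4" => MvPolynomial (Fin 4) k

-- nonmembership engine for F4
lemma NM2 {s : S4} (hs : constantCoeff s ≠ 0) :
    s * (X 0 * X 1) ∉ Ideal.span {(X 0 : S4) ^ 2, X 1 ^ 2, X 2, X 3} ⊔ defIdeal k := by
  intro h
  obtain ⟨u, hu, j, hj, huj⟩ := Submodule.mem_sup.1 h
  obtain ⟨α, u', hu', rfl⟩ := Ideal.mem_span_insert.1 hu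
  obtain ⟨β, u'', hu'', rfl⟩ := Ideal.mem_span_insert.1 hu'
  obtain ⟨γ, δ, hγδ⟩ := Ideal.mem_span_pair.1 hu''
  set ν : Fin 4 →₀ ℕ := Finsupp.single 0 1 + Finsupp.single 1 1 with hν
  have hν0 : ν 0 = 1 := by simp [hν, Finsupp.single_apply]
  have hν1 : ν 1 = 1 := by simp [hν, Finsupp.single_apply]
  have hν2 : ν 2 = 0 := by simp [hν, Finsupp.single_apply]
  have hν3 : ν 3 = 0 := by simp [hν, Finsupp.single_apply]
  have key := congrArg (coeff ν) huj.symm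
  have hX01 : (X 0 * X 1 : S4) = X 0 ^ 1 * X 1 ^ 1 := by ring
  rw [hX01, ← mul_assoc, mul_assoc s, X_pow_eq_monomial, X_pow_eq_monomial,
    monomial_mul, one_mul, coeff_mul_monomial', if_pos le_rfl, tsub_self] at key
  rw [← hγδ] at key
  have hg2 : (X 2 : S4) = X 2 ^ 1 := by ring
  have hg3 : (X 3 : S4) = X 3 ^ 1 := by ring
  simp only [coeff_add] at key
  rw [hg2, hg3, coeff_mul_X_pow, coeff_mul_X_pow, coeff_mul_X_pow, coeff_mul_X_pow,
    if_neg (by rw [Finsupp.single_le_iff, hν0]; omega),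
    if_neg (by rw [Finsupp.single_le_iff, hν1]; omega),
    if_neg (by rw [Finsupp.single_le_iff, hν2]; omega),
    if_neg (by rw [Finsupp.single_le_iff, hν3]; omega),
    coeff_defIdeal_cd k hj hν2 hν3] at key
  simp only [one_mul, mul_one, add_zero, zero_add] at key
  exact hs key

-- the projection killing c and d
noncomputable def phiAB : MvPolynomial (Fin 4) k →ₐ[k] MvPolynomial (Fin 4) k :=
  aeval ![X 0, X 1, 0, 0]

lemma phiAB_X0 : phiAB k (X 0) = X 0 := by simp [phiAB]
lemma phiAB_X1 : phiAB k (X 1) = X 1 := by simp [phiAB]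
lemma phiAB_X2 : phiAB k (X 2) = 0 := by simp [phiAB]
lemma phiAB_X3 : phiAB k (X 3) = 0 := by simp [phiAB]

lemma constantCoeff_phiAB (p : S4) : constantCoeff (phiAB k p) = constantCoeff p := by
  have : (constantCoeff : S4 →+* k).comp (phiAB k).toRingHom =
      (constantCoeff : S4 →+* k) := by
    apply MvPolynomial.ringHom_ext
    · intro a
      simp [phiAB]
    · intro i
      fin_cases i <;> simp [phiAB]
  exact RingHom.congr_fun this p

lemma phiAB_defIdeal {j : S4} (hj : j ∈ defIdeal k) : phiAB k j = 0 := by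
  obtain ⟨u, v, huv⟩ := Ideal.mem_span_pair.1 (Ideal.mem_inf.1 hj).2
  rw [← huv, map_add, map_mul, map_mul, phiAB_X2, phiAB_X3, mul_zero, mul_zero, add_zero]

end

section
variable (k : Type) [Field k]

local notation "S4" => MvPolynomial (Fin 4) k

-- nonmembership engine for F3
lemma NM3 {s : S4} (hs : constantCoeff s ≠ 0) {t : ℕ} (ht : 1 ≤ t) :
    s * ((X 0 + X 2) * (X 1 + X 3)) ^ (t - 1) ∉
      Ideal.span {((X 0 : S4) + X 2) ^ t, (X 1 + X 3) ^ t} ⊔ defIdeal k := by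
  intro h
  obtain ⟨u, hu, j, hj, huj⟩ := Submodule.mem_sup.1 h
  obtain ⟨α, β, hαβ⟩ := Ideal.mem_span_pair.1 hu
  have e : α * ((X 0 : S4) + X 2) ^ t + β * (X 1 + X 3) ^ t + j =
      s * ((X 0 + X 2) * (X 1 + X 3)) ^ (t - 1) := by rw [hαβ]; exact huj
  have e2 := congrArg (phiAB k) e
  simp only [map_add, map_mul, map_pow, phiAB_X0, phiAB_X1, phiAB_X2, phiAB_X3,
    phiAB_defIdeal k hj, add_zero] at e2
  -- e2 : Φα * X0^t + Φβ * X1^t = Φs * (X0*X1)^(t-1)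
  set ν : Fin 4 →₀ ℕ := Finsupp.single 0 (t-1) + Finsupp.single 1 (t-1) with hν
  have hν0 : ν 0 = t - 1 := by simp [hν, Finsupp.single_apply]
  have hν1 : ν 1 = t - 1 := by simp [hν, Finsupp.single_apply]
  have hmono : ((X 0 : S4) * X 1) ^ (t-1) = monomial ν 1 := by
    rw [mul_pow, X_pow_eq_monomial, X_pow_eq_monomial, monomial_mul, one_mul]
  have key := congrArg (coeff ν) e2
  rw [hmono, coeff_mul_monomial', if_pos le_rfl, tsub_self] at key
  rw [coeff_add, coeff_mul_X_pow, coeff_mul_X_pow,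
    if_neg (by rw [Finsupp.single_le_iff, hν0]; omega),
    if_neg (by rw [Finsupp.single_le_iff, hν1]; omega)] at key
  simp only [mul_one, add_zero, zero_add] at key
  rw [show coeff 0 (phiAB k s) = constantCoeff (phiAB k s) from rfl,
    constantCoeff_phiAB] at key
  exact hs key.symm

-- colon lemma for fact A
lemma CL {t : ℕ} (ht : 1 ≤ t) {h : S4}
    (hyp : h * (X 0 ^ 2 * X 1 ^ 2) ^ (t - 1) ∈
      Ideal.span {((X 0 : S4) ^ 2) ^ t, (X 1 ^ 2) ^ t} ⊔ defIdeal k) :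
    h ∈ Ideal.span {(X 0 : S4) ^ 2, X 1 ^ 2, X 2, X 3} := by
  obtain ⟨u, hu, j, hj, huj⟩ := Submodule.mem_sup.1 hyp
  obtain ⟨α, β, hαβ⟩ := Ideal.mem_span_pair.1 hu
  set μ : Fin 4 →₀ ℕ := Finsupp.single 0 (2*(t-1)) + Finsupp.single 1 (2*(t-1)) with hμ
  have hμ0 : μ 0 = 2*(t-1) := by simp [hμ, Finsupp.single_apply]
  have hμ1 : μ 1 = 2*(t-1) := by simp [hμ, Finsupp.single_apply]
  have hμ2 : μ 2 = 0 := by simp [hμ, Finsupp.single_apply]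
  have hμ3 : μ 3 = 0 := by simp [hμ, Finsupp.single_apply]
  have hmono : ((X 0 : S4) ^ 2 * X 1 ^ 2) ^ (t-1) = monomial μ 1 := by
    rw [mul_pow, ← pow_mul, ← pow_mul, X_pow_eq_monomial, X_pow_eq_monomial,
      monomial_mul, one_mul]
  have e : α * ((X 0 : S4) ^ 2) ^ t + β * ((X 1 : S4) ^ 2) ^ t + j = h * monomial μ 1 := by
    rw [hαβ, ← hmono]; exact huj
  have claim : ∀ m ∈ h.support, ∃ d ∈ ({Finsupp.single 0 2, Finsupp.single 1 2,
      Finsupp.single 2 1, Finsupp.single 3 1} : Set (Fin 4 →₀ ℕ)), d ≤ m := by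
    intro m hm
    by_contra hc
    push_neg at hc
    have h0 : ¬ (2 ≤ m 0) := fun hh => hc _ (by simp) (Finsupp.single_le_iff.2 hh)
    have h1 : ¬ (2 ≤ m 1) := fun hh => hc _ (by simp) (Finsupp.single_le_iff.2 hh)
    have h2 : ¬ (1 ≤ m 2) := fun hh => hc _ (by simp) (Finsupp.single_le_iff.2 hh)
    have h3 : ¬ (1 ≤ m 3) := fun hh => hc _ (by simp) (Finsupp.single_le_iff.2 hh)
    have key := congrArg (coeff (m + μ)) e
    rw [coeff_mul_monomial', if_pos le_add_self, add_tsub_cancel_right] at key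
    rw [coeff_add, coeff_add, ← pow_mul, ← pow_mul, coeff_mul_X_pow, coeff_mul_X_pow,
      if_neg (by rw [Finsupp.single_le_iff, Finsupp.add_apply, hμ0]; omega),
      if_neg (by rw [Finsupp.single_le_iff, Finsupp.add_apply, hμ1]; omega),
      coeff_defIdeal_cd k hj (by rw [Finsupp.add_apply, hμ2]; omega)
        (by rw [Finsupp.add_apply, hμ3]; omega)] at key
    simp only [mul_one, add_zero, zero_add] at key
    exact (mem_support_iff.1 hm) key.symm
  have himg : ({(X 0 : S4) ^ 2, X 1 ^ 2, X 2, X 3} : Set S4) =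
      (fun d => monomial d (1:k)) '' {Finsupp.single 0 2, Finsupp.single 1 2,
        Finsupp.single 2 1, Finsupp.single 3 1} := by
    rw [Set.image_insert_eq, Set.image_insert_eq, Set.image_insert_eq, Set.image_singleton]
    simp only [← X_pow_eq_monomial, pow_one]
  rw [himg]
  exact mem_ideal_span_monomial_image.2 claim

end

section
variable (k : Type) [Field k] [hp : (mQ k).IsPrime]

local notation "S4" => MvPolynomial (Fin 4) k
local notation "Rk" => Localization.AtPrime (mQ k)

lemma toLoc_mem_span {G : Set S4} {f : S4} (hf : f ∈ Ideal.span G) :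
    toLoc k f ∈ Ideal.span (toLoc k '' G) := by
  have himg : toLoc k '' G =
      ⇑((algebraMap (QR k) Rk).comp (Ideal.Quotient.mk (defIdeal k))) '' G := rfl
  rw [himg, ← Ideal.map_span]
  exact Ideal.mem_map_of_mem _ hf

lemma reduction (r : Rk) : ∃ q σ : S4, constantCoeff σ ≠ 0 ∧ r * toLoc k σ = toLoc k q := by
  obtain ⟨⟨q', σ'⟩, hqs⟩ := IsLocalization.surj (mQ k).primeCompl r
  obtain ⟨q, rfl⟩ := Ideal.Quotient.mk_surjective q'
  obtain ⟨σ, hσ⟩ := Ideal.Quotient.mk_surjective (σ' : QR k)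
  refine ⟨q, σ, ?_, ?_⟩
  · intro h0
    exact σ'.2 (hσ ▸ (mk_mem_mQ_iff k σ).2 h0)
  · rw [toLoc, toLoc, hσ]
    exact hqs

lemma maxIdeal_eq : IsLocalRing.maximalIdeal Rk =
    Ideal.span {toLoc k (X 0), toLoc k (X 1), toLoc k (X 2), toLoc k (X 3)} := by
  rw [← Localization.AtPrime.map_eq_maximalIdeal (I := mQ k)]
  show Ideal.map (algebraMap (QR k) Rk) (Ideal.span {Ideal.Quotient.mk (defIdeal k) (X 0),
      Ideal.Quotient.mk (defIdeal k) (X 1), Ideal.Quotient.mk (defIdeal k) (X 2),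
      Ideal.Quotient.mk (defIdeal k) (X 3)}) = _
  rw [Ideal.map_span, Set.image_insert_eq, Set.image_insert_eq, Set.image_insert_eq,
    Set.image_singleton]
  rfl

lemma toLoc_mem_max_iff (f : S4) :
    toLoc k f ∈ IsLocalRing.maximalIdeal Rk ↔ constantCoeff f = 0 := by
  rw [toLoc, IsLocalization.AtPrime.to_map_mem_maximal_iff Rk (mQ k), mk_mem_mQ_iff]

lemma isUnit_of_not_mem_max {r : Rk} (hr : r ∉ IsLocalRing.maximalIdeal Rk) : IsUnit r := by
  by_contra h
  exact hr (IsLocalRing.mem_maximalIdeal r |>.2 (mem_nonunits_iff.2 h))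

lemma image_pair (f g : S4) : toLoc k '' {f, g} = {toLoc k f, toLoc k g} := by
  rw [Set.image_insert_eq, Set.image_singleton]

lemma image_quad (f g h i : S4) :
    toLoc k '' {f, g, h, i} = {toLoc k f, toLoc k g, toLoc k h, toLoc k i} := by
  rw [Set.image_insert_eq, Set.image_insert_eq, Set.image_insert_eq, Set.image_singleton]

end

section
variable (k : Type) [Field k] [hp : (mQ k).IsPrime]

local notation "S4" => MvPolynomial (Fin 4) k
local notation "Rk" => Localization.AtPrime (mQ k)

lemma partA_sub {r : Rk}
    (h : r ∈ limClosure2 (toLoc k (X 0 ^ 2)) (toLoc k (X 1 ^ 2))) :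
    r ∈ Ideal.span {toLoc k (X 0 ^ 2), toLoc k (X 1 ^ 2), toLoc k (X 2), toLoc k (X 3)} := by
  obtain ⟨t, ht, hmem⟩ := h
  obtain ⟨q, σ, hσ, hr⟩ := reduction k r
  have hf : toLoc k (q * (X 0 ^ 2 * X 1 ^ 2) ^ (t-1)) ∈
      Ideal.span (toLoc k '' {(X 0 ^ 2 : S4) ^ t, (X 1 ^ 2) ^ t}) := by
    rw [image_pair, toLoc_mul k q _, toLoc_pow k (X 0 ^ 2 * X 1 ^ 2) (t-1),
      toLoc_mul k (X 0 ^ 2) (X 1 ^ 2), toLoc_pow k (X 0 ^ 2) t, toLoc_pow k (X 1 ^ 2) t]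
    have : toLoc k q * (toLoc k (X 0 ^ 2) * toLoc k (X 1 ^ 2)) ^ (t-1) =
        ((toLoc k (X 0 ^ 2) * toLoc k (X 1 ^ 2)) ^ (t-1) * r) * toLoc k σ := by
      rw [← hr]; ring
    rw [this]
    exact Ideal.mul_mem_right _ _ hmem
  obtain ⟨s, hs, hsf⟩ := descend k hf
  have hcl : s * q ∈ Ideal.span {(X 0 : S4) ^ 2, X 1 ^ 2, X 2, X 3} := by
    apply CL k ht
    rw [← mul_assoc] at hsf
    exact hsf
  have h2 : toLoc k (s * q) ∈
      Ideal.span {toLoc k (X 0 ^ 2), toLoc k (X 1 ^ 2), toLoc k (X 2), toLoc k (X 3)} := by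
    rw [← image_quad]
    exact toLoc_mem_span k hcl
  rw [toLoc_mul, Ideal.unit_mul_mem_iff_mem _ (isUnit_toLoc k hs)] at h2
  rw [← Ideal.unit_mul_mem_iff_mem _ (isUnit_toLoc k hσ), mul_comm, hr]
  exact h2

lemma partA_sup {r : Rk}
    (h : r ∈ Ideal.span {toLoc k (X 0 ^ 2), toLoc k (X 1 ^ 2), toLoc k (X 2), toLoc k (X 3)}) :
    r ∈ limClosure2 (toLoc k (X 0 ^ 2)) (toLoc k (X 1 ^ 2)) := by
  refine ⟨2, by norm_num, ?_⟩
  rw [show (2-1 : ℕ) = 1 from rfl, pow_one]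
  induction h using Submodule.span_induction with
  | mem z hz =>
    rcases hz with rfl | rfl | rfl | rfl
    · exact Ideal.mem_span_pair.2 ⟨toLoc k (X 1 ^ 2), 0, by ring⟩
    · exact Ideal.mem_span_pair.2 ⟨0, toLoc k (X 0 ^ 2), by ring⟩
    · have : toLoc k (X 0 ^ 2) * toLoc k (X 1 ^ 2) * toLoc k (X 2) =
          toLoc k (X 0 ^ 2 * X 1 ^ 2 * X 2) := by rw [toLoc_mul, toLoc_mul]
      rw [this, toLoc_eq_zero k (X 0 ^ 2 * X 1 ^ 2 * X 2) (Ideal.mem_inf.2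
        ⟨Ideal.mem_span_pair.2 ⟨X 0 * X 1 ^ 2 * X 2, 0, by ring⟩,
         Ideal.mem_span_pair.2 ⟨X 0 ^ 2 * X 1 ^ 2, 0, by ring⟩⟩)]
      exact Ideal.zero_mem _
    · have : toLoc k (X 0 ^ 2) * toLoc k (X 1 ^ 2) * toLoc k (X 3) =
          toLoc k (X 0 ^ 2 * X 1 ^ 2 * X 3) := by rw [toLoc_mul, toLoc_mul]
      rw [this, toLoc_eq_zero k (X 0 ^ 2 * X 1 ^ 2 * X 3) (Ideal.mem_inf.2
        ⟨Ideal.mem_span_pair.2 ⟨X 0 * X 1 ^ 2 * X 3, 0, by ring⟩,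
         Ideal.mem_span_pair.2 ⟨0, X 0 ^ 2 * X 1 ^ 2, by ring⟩⟩)]
      exact Ideal.zero_mem _
  | zero => rw [mul_zero]; exact Ideal.zero_mem _
  | add x y hx hy ihx ihy => rw [mul_add]; exact Ideal.add_mem _ ihx ihy
  | smul a x hx ihx =>
    rw [smul_eq_mul, mul_comm a x, ← mul_assoc]
    exact Ideal.mul_mem_right _ _ ihx

lemma part2 : ¬ (Ideal.span {toLoc k (X 0 ^ 2), toLoc k (X 1 ^ 2)}).radical =
    IsLocalRing.maximalIdeal Rk := by
  intro heq
  have hc : toLoc k (X 2) ∈ IsLocalRing.maximalIdeal Rk :=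
    (toLoc_mem_max_iff k _).2 (by simp)
  rw [← heq] at hc
  obtain ⟨n, hn⟩ := Ideal.mem_radical_iff.1 hc
  have hf : toLoc k (X 2 ^ n) ∈
      Ideal.span (toLoc k '' {(X 0 : S4) ^ 2, X 1 ^ 2}) := by
    rw [image_pair, toLoc_pow k (X 2) n]; exact hn
  obtain ⟨s, hs, hsf⟩ := descend k hf
  exact NM1 k hs n hsf

lemma part3_sub {r : Rk}
    (h : r ∈ limClosure2 (toLoc k (X 0 + X 2)) (toLoc k (X 1 + X 3))) :
    r ∈ IsLocalRing.maximalIdeal Rk := by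
  by_contra hr
  have hu := isUnit_of_not_mem_max k hr
  obtain ⟨t, ht, hmem⟩ := h
  have h1 : (toLoc k (X 0 + X 2) * toLoc k (X 1 + X 3)) ^ (t-1) ∈
      Ideal.span {toLoc k (X 0 + X 2) ^ t, toLoc k (X 1 + X 3) ^ t} := by
    have h2 := Ideal.mul_mem_right (↑hu.unit⁻¹) _ hmem
    rwa [mul_assoc, IsUnit.mul_val_inv hu, mul_one] at h2
  have hf : toLoc k (((X 0 + X 2) * (X 1 + X 3)) ^ (t-1)) ∈
      Ideal.span (toLoc k '' {((X 0 : S4) + X 2) ^ t, (X 1 + X 3) ^ t}) := by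
    rw [image_pair, toLoc_pow k ((X 0 + X 2) * (X 1 + X 3)) (t-1),
      toLoc_mul k (X 0 + X 2) (X 1 + X 3), toLoc_pow k (X 0 + X 2) t, toLoc_pow k (X 1 + X 3) t]
    exact h1
  obtain ⟨s, hs, hsf⟩ := descend k hf
  exact NM3 k hs ht hsf

lemma part3_sup {r : Rk}
    (h : r ∈ IsLocalRing.maximalIdeal Rk) :
    r ∈ limClosure2 (toLoc k (X 0 + X 2)) (toLoc k (X 1 + X 3)) := by
  rw [maxIdeal_eq] at h
  refine ⟨2, by norm_num, ?_⟩
  rw [show (2-1 : ℕ) = 1 from rfl, pow_one]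
  induction h using Submodule.span_induction with
  | mem z hz =>
    have base : ∀ (i : Fin 4) (u v : S4),
        (u * (X 0 + X 2) ^ 2 + v * (X 1 + X 3) ^ 2) - (X 0 + X 2) * (X 1 + X 3) * X i ∈
          defIdeal k →
        toLoc k (X 0 + X 2) * toLoc k (X 1 + X 3) * toLoc k (X i) ∈
          Ideal.span {toLoc k (X 0 + X 2) ^ 2, toLoc k (X 1 + X 3) ^ 2} := by
      intro i u v hd
      refine Ideal.mem_span_pair.2 ⟨toLoc k u, toLoc k v, ?_⟩
      have hl : toLoc k u * toLoc k (X 0 + X 2) ^ 2 + toLoc k v * toLoc k (X 1 + X 3) ^ 2 =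
          toLoc k (u * (X 0 + X 2) ^ 2 + v * (X 1 + X 3) ^ 2) := by
        rw [toLoc_add k (u * (X 0 + X 2) ^ 2) (v * (X 1 + X 3) ^ 2),
          toLoc_mul k u ((X 0 + X 2) ^ 2), toLoc_mul k v ((X 1 + X 3) ^ 2),
          toLoc_pow k (X 0 + X 2) 2, toLoc_pow k (X 1 + X 3) 2]
      have hrr : toLoc k (X 0 + X 2) * toLoc k (X 1 + X 3) * toLoc k (X i) =
          toLoc k ((X 0 + X 2) * (X 1 + X 3) * X i) := by
        rw [toLoc_mul k ((X 0 + X 2) * (X 1 + X 3)) (X i), toLoc_mul k (X 0 + X 2) (X 1 + X 3)]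
      rw [hl, hrr]
      exact toLoc_congr k hd
    rcases hz with rfl | rfl | rfl | rfl
    · exact base 0 (X 1) 0 (Ideal.mem_inf.2
        ⟨Ideal.mem_span_pair.2 ⟨X 1*X 2 - X 0*X 3 - X 2*X 3, X 2^2, by ring⟩,
         Ideal.mem_span_pair.2 ⟨X 0*X 1 + X 1*X 2 - X 0*X 3, -(X 0^2), by ring⟩⟩)
    · exact base 1 0 (X 0) (Ideal.mem_inf.2
        ⟨Ideal.mem_span_pair.2 ⟨X 1*X 3 + X 3^2, -(X 1*X 2) - X 2*X 3, by ring⟩,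
         Ideal.mem_span_pair.2 ⟨-(X 1^2) - X 1*X 3, X 0*X 1 + X 0*X 3, by ring⟩⟩)
    · exact base 2 (X 3) 0 (Ideal.mem_inf.2
        ⟨Ideal.mem_span_pair.2 ⟨X 0*X 3 + X 2*X 3 - X 1*X 2, -(X 2^2), by ring⟩,
         Ideal.mem_span_pair.2 ⟨X 0*X 3 - X 0*X 1 - X 1*X 2, X 0^2, by ring⟩⟩)
    · exact base 3 0 (X 2) (Ideal.mem_inf.2
        ⟨Ideal.mem_span_pair.2 ⟨-(X 1*X 3) - X 3^2, X 1*X 2 + X 2*X 3, by ring⟩,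
         Ideal.mem_span_pair.2 ⟨X 1^2 + X 1*X 3, -(X 0*X 1) - X 0*X 3, by ring⟩⟩)
  | zero => rw [mul_zero]; exact Ideal.zero_mem _
  | add x y hx hy ihx ihy => rw [mul_add]; exact Ideal.add_mem _ ihx ihy
  | smul a x hx ihx =>
    rw [smul_eq_mul, mul_comm a x, ← mul_assoc]
    exact Ideal.mul_mem_right _ _ ihx

lemma part4 {r : Rk}
    (h : toLoc k (X 0 * X 1) * r ∈ limClosure2 (toLoc k (X 0 ^ 2)) (toLoc k (X 1 ^ 2))) :
    r ∈ limClosure2 (toLoc k (X 0 + X 2)) (toLoc k (X 1 + X 3)) := by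
  have hab := partA_sub k h
  apply part3_sup
  by_contra hr
  have hu := isUnit_of_not_mem_max k hr
  have h1 : toLoc k (X 0 * X 1) ∈
      Ideal.span {toLoc k (X 0 ^ 2), toLoc k (X 1 ^ 2), toLoc k (X 2), toLoc k (X 3)} := by
    have h2 := Ideal.mul_mem_right (↑hu.unit⁻¹) _ hab
    rwa [mul_assoc, IsUnit.mul_val_inv hu, mul_one] at h2
  rw [← image_quad] at h1
  obtain ⟨s, hs, hsf⟩ := descend k h1
  exact NM2 k hs hsf

end

/-- in `R = (k[a,b,c,d]/((a,b) ∩ (c,d)))` localized at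
`m = (a,b,c,d)`, with `y₁ = a²`, `y₂ = b²`, `x₁ = a + c`, `x₂ = b + d`:
`(y₁,y₂)^lim = (a², b², c, d)`; `y₁, y₂` is not a system of parameters; and yet
`(y₁,y₂)^lim : ab ⊆ (x₁,x₂)^lim = m`, so the multiplication-by-`ab` map
`R/(x)^lim → R/(y)^lim` is injective although `y` is not a system of
parameters. -/
theorem stmt17 (k : Type) [Field k] [hp : (mQ k).IsPrime] :
    -- `(y₁,y₂)^lim = (a², b², c, d)`
    (∀ r : Localization.AtPrime (mQ k),
      r ∈ limClosure2 (toLoc k (X 0 ^ 2)) (toLoc k (X 1 ^ 2)) ↔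
        r ∈ Ideal.span {toLoc k (X 0 ^ 2), toLoc k (X 1 ^ 2),
          toLoc k (X 2), toLoc k (X 3)}) ∧
    -- `y₁, y₂` is not a system of parameters
    ¬ (Ideal.span {toLoc k (X 0 ^ 2), toLoc k (X 1 ^ 2)}).radical =
        IsLocalRing.maximalIdeal (Localization.AtPrime (mQ k)) ∧
    -- `(x₁,x₂)^lim = m`
    (∀ r : Localization.AtPrime (mQ k),
      r ∈ limClosure2 (toLoc k (X 0 + X 2)) (toLoc k (X 1 + X 3)) ↔
        r ∈ IsLocalRing.maximalIdeal (Localization.AtPrime (mQ k))) ∧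
    -- injectivity: `(y)^lim : ab ⊆ (x)^lim`
    (∀ r : Localization.AtPrime (mQ k),
      toLoc k (X 0 * X 1) * r ∈ limClosure2 (toLoc k (X 0 ^ 2)) (toLoc k (X 1 ^ 2)) →
        r ∈ limClosure2 (toLoc k (X 0 + X 2)) (toLoc k (X 1 + X 3))) := by
  exact ⟨fun r => ⟨partA_sub k, partA_sup k⟩, part2 k,
    fun r => ⟨part3_sub k, part3_sup k⟩, fun r => part4 k⟩
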